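/- If f:D→ℝ satisfies f(x)+f(y) ≥ f(x ↑^d y) + f(x ↓_d y) for all x,y∈D and all integers d≥0, then f is strongly tree-submodular, i.e. f(x)+f(y) ≥ f(x⊓y)+f(x⊔y) for all x,y∈D. -/

import Mathlib

/-- A finite rooted tree on vertex set `V`, encoded by its root, the parent function
(with `parent root = root`) and the depth function (distance to the root). -/
structure RTree (V : Type*) where
  root : V
  parent : V → V
  depth : V → ℕ
  parent_root : parent root = root
  depth_root : depth root = 0
  depth_parent : ∀ v, v ≠ root → depth (parent v) + 1 = depth v

namespace RTree

variable {V : Type*} (T : RTree V)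

/-- `a ⪯ b` : `a` is an ancestor of `b`, i.e. `a` lies on the path from `b` to the root. -/
def anc (a b : V) : Prop := ∃ k : ℕ, T.parent^[k] b = a

theorem iterate_depth_aux : ∀ (n : ℕ) (v : V), T.depth v = n → T.parent^[n] v = T.root := by
  intro n
  induction n with
  | zero =>
    intro v hn
    by_cases hv : v = T.root
    · simp [hv]
    · have := T.depth_parent v hv; omega
  | succ n ih =>
    intro v hn
    have hv : v ≠ T.root := by
      intro h; rw [h, T.depth_root] at hn; omega
    have h := T.depth_parent v hv
    rw [Function.iterate_succ_apply]
    exact ih (T.parent v) (by omega)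

theorem iterate_depth (v : V) : T.parent^[T.depth v] v = T.root :=
  T.iterate_depth_aux (T.depth v) v rfl

theorem anc_root (b : V) : T.anc T.root b := ⟨T.depth b, T.iterate_depth b⟩

theorem exists_lcaIndex (a b : V) : ∃ k : ℕ, T.anc (T.parent^[k] a) b :=
  ⟨T.depth a, by rw [T.iterate_depth a]; exact T.anc_root b⟩

open Classical in
/-- The highest common ancestor of `a` and `b` : the deepest vertex that is an ancestor
of both `a` and `b` (i.e. the unique vertex of the path `P[a→b]` that is an ancestor of both). -/
noncomputable def lca (a b : V) : V := T.parent^[Nat.find (T.exists_lcaIndex a b)] a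

/-- `ρ(a,b)` : the number of edges of the unique path `P[a→b]` from `a` to `b`. -/
noncomputable def dist (a b : V) : ℕ :=
  (T.depth a - T.depth (T.lca a b)) + (T.depth b - T.depth (T.lca a b))

open Classical in
/-- `P[a→b, d]` : the `d`-th vertex of the path from `a` to `b` (first the ascending part
from `a` to the highest common ancestor, then the descending part towards `b`);
by convention it equals `b` for `d > ρ(a,b)`. -/
noncomputable def pathVertex (a b : V) (d : ℕ) : V :=
  if T.dist a b ≤ d then b
  else if d ≤ T.depth a - T.depth (T.lca a b) then T.parent^[d] a
  else T.parent^[T.dist a b - d] b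

open Classical in
/-- `a ⊓ b` : the member of `{P[a→b,⌊ρ(a,b)/2⌋], P[a→b,⌈ρ(a,b)/2⌉]}` that is an
ancestor of the other one. -/
noncomputable def cap (a b : V) : V :=
  if T.anc (T.pathVertex a b (T.dist a b / 2)) (T.pathVertex a b ((T.dist a b + 1) / 2))
  then T.pathVertex a b (T.dist a b / 2)
  else T.pathVertex a b ((T.dist a b + 1) / 2)

open Classical in
/-- `a ⊔ b` : the member of `{P[a→b,⌊ρ(a,b)/2⌋], P[a→b,⌈ρ(a,b)/2⌉]}` that is a
descendant of the other one. -/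
noncomputable def cup (a b : V) : V :=
  if T.anc (T.pathVertex a b (T.dist a b / 2)) (T.pathVertex a b ((T.dist a b + 1) / 2))
  then T.pathVertex a b ((T.dist a b + 1) / 2)
  else T.pathVertex a b (T.dist a b / 2)

/-- `a ∧ b` : the highest common ancestor of `a` and `b`. -/
noncomputable def meet (a b : V) : V := T.lca a b

/-- `a ∨ b` : the unique vertex of `P[a→b]` with `ρ(a, a∨b) = ρ(a∧b, b)`. -/
noncomputable def join (a b : V) : V :=
  T.pathVertex a b (T.depth b - T.depth (T.lca a b))

/-- `a ↑^d b = P[a→b,d] ∧ b`. -/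
noncomputable def up (d : ℕ) (a b : V) : V := T.meet (T.pathVertex a b d) b

/-- `a ↓_d b = P[a→b, ρ(a ↑^d b, b)]`. -/
noncomputable def down (d : ℕ) (a b : V) : V :=
  T.pathVertex a b (T.dist (T.up d a b) b)

end RTree

section Product

variable {ι : Type*} {V : ι → Type*}

/-- `f` is strongly tree-submodular w.r.t. the trees `T i`:
`f(x) + f(y) ≥ f(x ⊓ y) + f(x ⊔ y)`, the operations acting componentwise. -/
def StronglyTreeSubmodular (T : ∀ i, RTree (V i)) (f : (∀ i, V i) → ℝ) : Prop :=
  ∀ x y : ∀ i, V i,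
    f (fun i => (T i).cap (x i) (y i)) + f (fun i => (T i).cup (x i) (y i)) ≤ f x + f y

/-- `INWARD(x) = { y ∈ NEIB(x) : y ⪯ x }`, where `NEIB(x) = {y : max_i ρ(x_i,y_i) ≤ 1}`. -/
def inward (T : ∀ i, RTree (V i)) (x : ∀ i, V i) : Set (∀ i, V i) :=
  {y | (∀ i, (T i).dist (x i) (y i) ≤ 1) ∧ ∀ i, (T i).anc (y i) (x i)}

/-- `OUTWARD(x) = { y ∈ NEIB(x) : x ⪯ y }`. -/
def outward (T : ∀ i, RTree (V i)) (x : ∀ i, V i) : Set (∀ i, V i) :=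
  {y | (∀ i, (T i).dist (x i) (y i) ≤ 1) ∧ ∀ i, (T i).anc (x i) (y i)}

end Product


namespace RTree

variable {V : Type*} (T : RTree V)

theorem iterate_root (j : ℕ) : T.parent^[j] T.root = T.root :=
  Function.iterate_fixed T.parent_root j

theorem depth_parent_eq (v : V) : T.depth (T.parent v) = T.depth v - 1 := by
  by_cases hv : v = T.root
  · subst hv; rw [T.parent_root, T.depth_root]
  · have := T.depth_parent v hv; omega

theorem depth_iterate' (j : ℕ) (v : V) : T.depth (T.parent^[j] v) = T.depth v - j := by
  induction j with
  | zero => simp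
  | succ j ih => rw [Function.iterate_succ_apply', depth_parent_eq, ih]; omega

theorem eq_root_of_depth_eq_zero {v : V} (h : T.depth v = 0) : v = T.root := by
  by_contra hv
  have := T.depth_parent v hv; omega

theorem anc_iterate (j : ℕ) (v : V) : T.anc (T.parent^[j] v) v := ⟨j, rfl⟩

theorem anc_refl (v : V) : T.anc v v := ⟨0, rfl⟩

theorem anc_depth_le {a b : V} (h : T.anc a b) : T.depth a ≤ T.depth b := by
  obtain ⟨k, hk⟩ := h
  rw [← hk, depth_iterate']; omega

theorem iterate_of_anc {a b : V} (h : T.anc a b) :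
    T.parent^[T.depth b - T.depth a] b = a := by
  obtain ⟨k, hk⟩ := h
  by_cases hkb : k ≤ T.depth b
  · have hd : T.depth a = T.depth b - k := by rw [← hk, depth_iterate']
    have : T.depth b - T.depth a = k := by omega
    rw [this, hk]
  · have hroot : T.parent^[k] b = T.root := by
      have : k = (k - T.depth b) + T.depth b := by omega
      rw [this, Function.iterate_add_apply, T.iterate_depth, iterate_root]
    have ha : a = T.root := by rw [← hk, hroot]
    subst ha
    rw [T.depth_root, Nat.sub_zero, T.iterate_depth]

theorem anc_of_le {v : V} {i j : ℕ} (h : i ≤ j) :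
    T.anc (T.parent^[j] v) (T.parent^[i] v) := by
  refine ⟨j - i, ?_⟩
  rw [← Function.iterate_add_apply]
  congr 1
  omega

theorem le_of_anc {v : V} {i j : ℕ} (hi : i ≤ T.depth v) (hj : j ≤ T.depth v)
    (h : T.anc (T.parent^[j] v) (T.parent^[i] v)) : i ≤ j := by
  have := T.anc_depth_le h
  rw [depth_iterate', depth_iterate'] at this
  omega

open Classical in
theorem lca_def (a b : V) : T.lca a b = T.parent^[Nat.find (T.exists_lcaIndex a b)] a := rfl

open Classical in
theorem lca_anc_left (a b : V) : T.anc (T.lca a b) a := by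
  rw [lca_def]; exact T.anc_iterate _ a

open Classical in
theorem lca_anc_right (a b : V) : T.anc (T.lca a b) b := by
  rw [lca_def]; exact Nat.find_spec (T.exists_lcaIndex a b)

open Classical in
theorem lca_eq_of_anc {a b : V} (h : T.anc a b) : T.lca a b = a := by
  rw [lca_def]
  have h0 : T.anc (T.parent^[0] a) b := by simpa using h
  have := Nat.find_le (h := T.exists_lcaIndex a b) h0
  have hz : Nat.find (T.exists_lcaIndex a b) = 0 := by omega
  rw [hz]; rfl

open Classical in
theorem lca_chain (c : V) {p q : ℕ} (hp : p ≤ T.depth c) (hq : q ≤ T.depth c) :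
    T.lca (T.parent^[p] c) (T.parent^[q] c) = T.parent^[max p q] c := by
  have h0 : T.anc (T.parent^[max p q - p] (T.parent^[p] c)) (T.parent^[q] c) := by
    rw [← Function.iterate_add_apply]
    have heq : max p q - p + p = max p q := by omega
    rw [heq]
    exact T.anc_of_le (le_max_right p q)
  have hle : Nat.find (T.exists_lcaIndex (T.parent^[p] c) (T.parent^[q] c)) ≤ max p q - p :=
    Nat.find_le (h := T.exists_lcaIndex (T.parent^[p] c) (T.parent^[q] c)) h0
  have hspec := Nat.find_spec (T.exists_lcaIndex (T.parent^[p] c) (T.parent^[q] c))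
  set j := Nat.find (T.exists_lcaIndex (T.parent^[p] c) (T.parent^[q] c)) with hj
  rw [← Function.iterate_add_apply] at hspec
  have hge : q ≤ j + p := T.le_of_anc hq (by omega) hspec
  rw [lca_def, ← hj, ← Function.iterate_add_apply]
  congr 1
  omega

theorem depth_lca_le_left (a b : V) : T.depth (T.lca a b) ≤ T.depth a :=
  T.anc_depth_le (T.lca_anc_left a b)

theorem depth_lca_le_right (a b : V) : T.depth (T.lca a b) ≤ T.depth b :=
  T.anc_depth_le (T.lca_anc_right a b)

theorem dist_def (a b : V) :
    T.dist a b = (T.depth a - T.depth (T.lca a b)) + (T.depth b - T.depth (T.lca a b)) := rfl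

theorem dist_chain (c : V) {p q : ℕ} (hp : p ≤ T.depth c) (hq : q ≤ T.depth c) :
    T.dist (T.parent^[p] c) (T.parent^[q] c) = max p q - min p q := by
  rw [dist_def, lca_chain T c hp hq, depth_iterate', depth_iterate', depth_iterate']
  omega

end RTree

namespace RTree

variable {V : Type*} (T : RTree V)

theorem pv_of_dist_le {a b : V} {d : ℕ} (h : T.dist a b ≤ d) : T.pathVertex a b d = b := by
  unfold pathVertex
  rw [if_pos h]

theorem pv_le_asc (a b : V) {d : ℕ} (hd : d ≤ T.depth a - T.depth (T.lca a b)) :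
    T.pathVertex a b d = T.parent^[d] a := by
  have hLa := T.iterate_of_anc (T.lca_anc_left a b)
  have hLb := T.iterate_of_anc (T.lca_anc_right a b)
  have hka := T.depth_lca_le_left a b
  have hkb := T.depth_lca_le_right a b
  unfold pathVertex
  split_ifs with h1
  · -- dist ≤ d ≤ k : forces d = k and depth b = depth lca
    rw [dist_def] at h1
    have hm : T.depth b - T.depth (T.lca a b) = 0 := by omega
    have hd' : d = T.depth a - T.depth (T.lca a b) := by omega
    rw [hm] at hLb
    simp only [Function.iterate_zero_apply] at hLb
    rw [hd', hLa]
    exact hLb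
  · rfl

theorem pv_ge_asc (a b : V) {d : ℕ} (h1 : T.depth a - T.depth (T.lca a b) ≤ d)
    (h2 : d ≤ T.dist a b) :
    T.pathVertex a b d = T.parent^[T.dist a b - d] b := by
  have hLa := T.iterate_of_anc (T.lca_anc_left a b)
  have hLb := T.iterate_of_anc (T.lca_anc_right a b)
  have hka := T.depth_lca_le_left a b
  have hkb := T.depth_lca_le_right a b
  have hdd := T.dist_def a b
  by_cases hc : T.dist a b ≤ d
  · -- dist ≤ d : d = dist
    have : T.dist a b - d = 0 := by omega
    rw [pv_of_dist_le T hc, this]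
    simp
  · unfold pathVertex
    rw [if_neg hc]
    split_ifs with h1'
    · -- d ≤ k : d = k
      have hd' : d = T.depth a - T.depth (T.lca a b) := le_antisymm h1' h1
      have hm : T.dist a b - d = T.depth b - T.depth (T.lca a b) := by omega
      rw [hm, hLb, hd', hLa]
    · rfl

theorem up_zero (a b : V) : T.up 0 a b = T.lca a b := by
  unfold up meet
  by_cases h : T.dist a b = 0
  · have hLa := T.iterate_of_anc (T.lca_anc_left a b)
    have hLb := T.iterate_of_anc (T.lca_anc_right a b)
    have hka := T.depth_lca_le_left a b
    have hkb := T.depth_lca_le_right a b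
    have hdd := T.dist_def a b
    have ha : a = T.lca a b := by
      have : T.depth a - T.depth (T.lca a b) = 0 := by omega
      rw [this] at hLa; simpa using hLa
    have hb : b = T.lca a b := by
      have : T.depth b - T.depth (T.lca a b) = 0 := by omega
      rw [this] at hLb; simpa using hLb
    rw [pv_of_dist_le T (by omega)]
    rw [T.lca_eq_of_anc (T.anc_refl b), ← hb]
  · rw [pv_le_asc T a b (d := 0) (Nat.zero_le _)]
    simp

theorem dist_lca_right (a b : V) :
    T.dist (T.lca a b) b = T.depth b - T.depth (T.lca a b) := by
  rw [dist_def, T.lca_eq_of_anc (T.lca_anc_right a b)]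
  omega

theorem down_zero (a b : V) :
    T.down 0 a b = T.pathVertex a b (T.depth b - T.depth (T.lca a b)) := by
  unfold down
  rw [up_zero, dist_lca_right]

theorem up_chain (c : V) {p q d : ℕ} (hqp : q ≤ p) (hp : p ≤ T.depth c) :
    T.up d (T.parent^[p] c) (T.parent^[q] c) = T.parent^[max (p - d) q] c := by
  have hq : q ≤ T.depth c := le_trans hqp hp
  have hlca := T.lca_chain c hp hq
  have hdist := T.dist_chain c hp hq
  unfold up meet
  by_cases hc : p - q ≤ d
  · rw [pv_of_dist_le T (by omega)]
    rw [T.lca_chain c hq hq]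
    congr 1
    omega
  · rw [pv_ge_asc T _ _ (d := d) (by rw [hlca, depth_iterate', depth_iterate']; omega)
      (by omega)]
    rw [hdist]
    rw [← Function.iterate_add_apply]
    rw [T.lca_chain c (by omega) hq]
    congr 1
    omega

theorem down_chain (c : V) {p q d : ℕ} (hqp : q ≤ p) (hp : p ≤ T.depth c) :
    T.down d (T.parent^[p] c) (T.parent^[q] c) = T.parent^[p - ((p - q) - d)] c := by
  have hq : q ≤ T.depth c := le_trans hqp hp
  unfold down
  rw [up_chain T c hqp hp]
  rw [T.dist_chain c (by omega) hq]
  have hD : max (max (p - d) q) q - min (max (p - d) q) q = max (p - d) q - q := by omega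
  rw [hD]
  have hlca := T.lca_chain c hp hq
  rw [pv_ge_asc T _ _ (by rw [hlca, depth_iterate', depth_iterate']; omega)
      (by rw [T.dist_chain c hp hq]; omega)]
  rw [T.dist_chain c hp hq, ← Function.iterate_add_apply]
  congr 1
  omega

theorem up_zero_chain (c : V) {p q : ℕ} (hp : p ≤ T.depth c) (hq : q ≤ T.depth c) :
    T.up 0 (T.parent^[p] c) (T.parent^[q] c) = T.parent^[max p q] c := by
  rw [up_zero, lca_chain T c hp hq]

theorem down_zero_chain (c : V) {p q : ℕ} (hp : p ≤ T.depth c) (hq : q ≤ T.depth c) :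
    T.down 0 (T.parent^[p] c) (T.parent^[q] c) = T.parent^[min p q] c := by
  rw [down_zero]
  rw [lca_chain T c hp hq, depth_iterate', depth_iterate']
  rcases le_or_gt q p with h | h
  · rw [pv_ge_asc T _ _ (by rw [lca_chain T c hp hq, depth_iterate', depth_iterate']; omega)
        (by rw [T.dist_chain c hp hq]; omega)]
    rw [T.dist_chain c hp hq, ← Function.iterate_add_apply]
    congr 1
    omega
  · rw [pv_le_asc T _ _ (by rw [lca_chain T c hp hq, depth_iterate', depth_iterate']; omega)]
    rw [← Function.iterate_add_apply]
    congr 1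
    omega

end RTree

namespace RTree

variable {V : Type*} (T : RTree V)

theorem norm (a b : V) : ∃ (c : V) (p q : ℕ), p ≤ T.depth c ∧ q ≤ p ∧
    T.up 0 a b = T.parent^[p] c ∧ T.down 0 a b = T.parent^[q] c ∧
    T.cap a b = T.parent^[(p + q + 1) / 2] c ∧ T.cup a b = T.parent^[(p + q) / 2] c := by
  have hLa := T.iterate_of_anc (T.lca_anc_left a b)
  have hLb := T.iterate_of_anc (T.lca_anc_right a b)
  have hka := T.depth_lca_le_left a b
  have hkb := T.depth_lca_le_right a b
  have hdd := T.dist_def a b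
  set k := T.depth a - T.depth (T.lca a b) with hk
  set m := T.depth b - T.depth (T.lca a b) with hm
  rcases le_or_gt k m with hkm | hkm
  · -- m ≥ k : base point b, p = m, q = k
    refine ⟨b, m, k, by omega, hkm, ?_, ?_, ?_, ?_⟩
    · rw [up_zero, ← hLb]
    · rw [down_zero, ← hm]
      rcases Nat.eq_zero_or_pos (T.dist a b) with h0 | h0
      · have hm0 : m = 0 := by omega
        have hk0 : k = 0 := by omega
        rw [hm0, hk0, pv_of_dist_le T (by omega)]
        simp
      · rw [pv_ge_asc T a b (by omega) (by omega)]
        congr 1 <;> omega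
    · -- cap
      unfold cap
      have hpv1 : T.pathVertex a b (T.dist a b / 2) = T.parent^[(m + k + 1) / 2] b := by
        rcases Nat.eq_zero_or_pos (T.dist a b) with h0 | h0
        · have hm0 : m = 0 := by omega
          have hk0 : k = 0 := by omega
          rw [hm0, hk0, pv_of_dist_le T (by omega)]
          simp
        · rw [pv_ge_asc T a b (by omega) (by omega)]
          congr 1 <;> omega
      have hpv2 : T.pathVertex a b ((T.dist a b + 1) / 2) = T.parent^[(m + k) / 2] b := by
        rcases Nat.eq_zero_or_pos (T.dist a b) with h0 | h0
        · have hm0 : m = 0 := by omega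
          have hk0 : k = 0 := by omega
          rw [hm0, hk0, pv_of_dist_le T (by omega)]
          simp
        · rw [pv_ge_asc T a b (by omega) (by omega)]
          congr 1 <;> omega
      rw [hpv1, hpv2, if_pos (T.anc_of_le (by omega))]
    · -- cup
      unfold cup
      have hpv1 : T.pathVertex a b (T.dist a b / 2) = T.parent^[(m + k + 1) / 2] b := by
        rcases Nat.eq_zero_or_pos (T.dist a b) with h0 | h0
        · have hm0 : m = 0 := by omega
          have hk0 : k = 0 := by omega
          rw [hm0, hk0, pv_of_dist_le T (by omega)]
          simp
        · rw [pv_ge_asc T a b (by omega) (by omega)]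
          congr 1 <;> omega
      have hpv2 : T.pathVertex a b ((T.dist a b + 1) / 2) = T.parent^[(m + k) / 2] b := by
        rcases Nat.eq_zero_or_pos (T.dist a b) with h0 | h0
        · have hm0 : m = 0 := by omega
          have hk0 : k = 0 := by omega
          rw [hm0, hk0, pv_of_dist_le T (by omega)]
          simp
        · rw [pv_ge_asc T a b (by omega) (by omega)]
          congr 1 <;> omega
      rw [hpv1, hpv2, if_pos (T.anc_of_le (by omega))]
  · -- m < k : base point a, p = k, q = m
    have hk1 : 1 ≤ k := by omega
    have hd1 : 1 ≤ T.dist a b := by omega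
    refine ⟨a, k, m, by omega, by omega, ?_, ?_, ?_, ?_⟩
    · rw [up_zero, ← hLa]
    · rw [down_zero, ← hm, pv_le_asc T a b (by omega)]
    · -- cap
      unfold cap
      have hpv1 : T.pathVertex a b (T.dist a b / 2) = T.parent^[(k + m) / 2] a := by
        rw [pv_le_asc T a b (by omega)]
        congr 1 <;> omega
      have hpv2 : T.pathVertex a b ((T.dist a b + 1) / 2) = T.parent^[(k + m + 1) / 2] a := by
        rcases le_or_gt (T.dist a b) ((T.dist a b + 1) / 2) with h0 | h0
        · -- dist = 1
          have hd : T.dist a b = 1 := by omega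
          have hm0 : m = 0 := by omega
          have hk1' : k = 1 := by omega
          rw [pv_of_dist_le T h0]
          rw [hm0] at hLb
          simp only [Function.iterate_zero_apply] at hLb
          rw [hLb, ← hLa]
          congr 1 <;> omega
        · rw [pv_le_asc T a b (by omega)]
          congr 1 <;> omega
      rw [hpv1, hpv2]
      rcases Nat.even_or_odd (T.dist a b) with he | he
      · have hexp : (k + m) / 2 = (k + m + 1) / 2 := by
          obtain ⟨t, ht⟩ := he; omega
        rw [if_pos (by rw [hexp]; exact T.anc_refl _)]
        rw [hexp]
      · have hexp : (k + m) / 2 < (k + m + 1) / 2 := by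
          obtain ⟨t, ht⟩ := he; omega
        rw [if_neg ?_]
        intro hanc
        have := T.le_of_anc (i := (k + m + 1) / 2) (j := (k + m) / 2) (by omega) (by omega) hanc
        omega
    · -- cup
      unfold cup
      have hpv1 : T.pathVertex a b (T.dist a b / 2) = T.parent^[(k + m) / 2] a := by
        rw [pv_le_asc T a b (by omega)]
        congr 1 <;> omega
      have hpv2 : T.pathVertex a b ((T.dist a b + 1) / 2) = T.parent^[(k + m + 1) / 2] a := by
        rcases le_or_gt (T.dist a b) ((T.dist a b + 1) / 2) with h0 | h0
        · have hd : T.dist a b = 1 := by omega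
          have hm0 : m = 0 := by omega
          rw [pv_of_dist_le T h0]
          rw [hm0] at hLb
          simp only [Function.iterate_zero_apply] at hLb
          rw [hLb, ← hLa]
          congr 1 <;> omega
        · rw [pv_le_asc T a b (by omega)]
          congr 1 <;> omega
      rw [hpv1, hpv2]
      rcases Nat.even_or_odd (T.dist a b) with he | he
      · have hexp : (k + m) / 2 = (k + m + 1) / 2 := by
          obtain ⟨t, ht⟩ := he; omega
        rw [if_pos (by rw [hexp]; exact T.anc_refl _)]
        rw [hexp]
      · have hexp : (k + m) / 2 < (k + m + 1) / 2 := by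
          obtain ⟨t, ht⟩ := he; omega
        rw [if_neg ?_]
        intro hanc
        have := T.le_of_anc (i := (k + m + 1) / 2) (j := (k + m) / 2) (by omega) (by omega) hanc
        omega

end RTree

section KeyLemma

variable {ι : Type*} {V : ι → Type*}

theorem key_submod (T : ∀ i, RTree (V i)) (f : (∀ i, V i) → ℝ)
    (h : ∀ (x y : ∀ i, V i) (d : ℕ),
      f (fun i => (T i).up d (x i) (y i)) + f (fun i => (T i).down d (x i) (y i)) ≤
        f x + f y) :
    ∀ (M : ℕ) (c : ∀ i, V i) (p q : ι → ℕ), (∀ i, q i ≤ p i) →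
      (∀ i, p i ≤ (T i).depth (c i)) → (∀ i, p i - q i ≤ M) →
      f (fun i => (T i).parent^[(p i + q i + 1) / 2] (c i)) +
        f (fun i => (T i).parent^[(p i + q i) / 2] (c i)) ≤
      f (fun i => (T i).parent^[p i] (c i)) + f (fun i => (T i).parent^[q i] (c i)) := by
  intro M
  induction M using Nat.strong_induction_on with
  | _ M ih =>
    intro c p q hqp hpd hgap
    by_cases hM : M ≤ 1
    · have e1 : (fun i => (T i).parent^[(p i + q i + 1) / 2] (c i)) =
          fun i => (T i).parent^[p i] (c i) := by
        funext i
        have h1 := hgap i; have h2 := hqp i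
        have : (p i + q i + 1) / 2 = p i := by omega
        rw [this]
      have e2 : (fun i => (T i).parent^[(p i + q i) / 2] (c i)) =
          fun i => (T i).parent^[q i] (c i) := by
        funext i
        have h1 := hgap i; have h2 := hqp i
        have : (p i + q i) / 2 = q i := by omega
        rw [this]
      rw [e1, e2]
    · push_neg at hM
      set d := (M + 1) / 2 with hd
      have hdM : d < M := by omega
      -- step 1 : apply h with parameter d
      have step1 := h (fun i => (T i).parent^[p i] (c i)) (fun i => (T i).parent^[q i] (c i)) d
      have hu : (fun i => (T i).up d ((T i).parent^[p i] (c i)) ((T i).parent^[q i] (c i))) =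
          fun i => (T i).parent^[max (p i - d) (q i)] (c i) := by
        funext i; exact (T i).up_chain (c i) (hqp i) (hpd i)
      have hv : (fun i => (T i).down d ((T i).parent^[p i] (c i)) ((T i).parent^[q i] (c i))) =
          fun i => (T i).parent^[p i - ((p i - q i) - d)] (c i) := by
        funext i; exact (T i).down_chain (c i) (hqp i) (hpd i)
      rw [hu, hv] at step1
      -- step 2 : apply h with parameter 0 to sort
      have step2 := h (fun i => (T i).parent^[max (p i - d) (q i)] (c i))
        (fun i => (T i).parent^[p i - ((p i - q i) - d)] (c i)) 0
      have hu0 : (fun i => (T i).up 0 ((T i).parent^[max (p i - d) (q i)] (c i))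
            ((T i).parent^[p i - ((p i - q i) - d)] (c i))) =
          fun i => (T i).parent^[max (max (p i - d) (q i)) (p i - ((p i - q i) - d))] (c i) := by
        funext i
        exact (T i).up_zero_chain (c i) (by have := hpd i; have := hqp i; omega)
          (by have := hpd i; have := hqp i; omega)
      have hv0 : (fun i => (T i).down 0 ((T i).parent^[max (p i - d) (q i)] (c i))
            ((T i).parent^[p i - ((p i - q i) - d)] (c i))) =
          fun i => (T i).parent^[min (max (p i - d) (q i)) (p i - ((p i - q i) - d))] (c i) := by
        funext i
        exact (T i).down_zero_chain (c i) (by have := hpd i; have := hqp i; omega)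
          (by have := hpd i; have := hqp i; omega)
      rw [hu0, hv0] at step2
      -- inductive hypothesis on the sorted pair
      have hIH := ih d hdM c
        (fun i => max (max (p i - d) (q i)) (p i - ((p i - q i) - d)))
        (fun i => min (max (p i - d) (q i)) (p i - ((p i - q i) - d)))
        (fun i => min_le_max)
        (fun i => by have := hpd i; have := hqp i; (try dsimp only); omega)
        (fun i => by have := hgap i; have := hqp i; (try dsimp only); omega)
      have hsum1 : (fun i => (T i).parent^[(max (max (p i - d) (q i)) (p i - ((p i - q i) - d)) +
            min (max (p i - d) (q i)) (p i - ((p i - q i) - d)) + 1) / 2] (c i)) =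
          fun i => (T i).parent^[(p i + q i + 1) / 2] (c i) := by
        funext i
        have h2 := hqp i
        have heq : (max (max (p i - d) (q i)) (p i - ((p i - q i) - d)) +
            min (max (p i - d) (q i)) (p i - ((p i - q i) - d)) + 1) / 2
            = (p i + q i + 1) / 2 := by omega
        rw [heq]
      have hsum2 : (fun i => (T i).parent^[(max (max (p i - d) (q i)) (p i - ((p i - q i) - d)) +
            min (max (p i - d) (q i)) (p i - ((p i - q i) - d))) / 2] (c i)) =
          fun i => (T i).parent^[(p i + q i) / 2] (c i) := by
        funext i
        have h2 := hqp i
        have heq : (max (max (p i - d) (q i)) (p i - ((p i - q i) - d)) +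
            min (max (p i - d) (q i)) (p i - ((p i - q i) - d))) / 2
            = (p i + q i) / 2 := by omega
        rw [heq]
      rw [hsum1, hsum2] at hIH
      calc f (fun i => (T i).parent^[(p i + q i + 1) / 2] (c i)) +
            f (fun i => (T i).parent^[(p i + q i) / 2] (c i)) ≤ _ := hIH
        _ ≤ _ := step2
        _ ≤ _ := step1

end KeyLemma

/-- If `f(x) + f(y) ≥ f(x ↑^d y) + f(x ↓_d y)` for all `x, y` and all
integers `d ≥ 0`, then `f` is strongly tree-submodular. -/
theorem translation_submodularity_implies_strong {ι : Type*} [Fintype ι] {V : ι → Type*}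
    [∀ i, Fintype (V i)] (T : ∀ i, RTree (V i)) (f : (∀ i, V i) → ℝ)
    (h : ∀ (x y : ∀ i, V i) (d : ℕ),
      f (fun i => (T i).up d (x i) (y i)) + f (fun i => (T i).down d (x i) (y i)) ≤
        f x + f y) :
    StronglyTreeSubmodular T f := by
  intro x y
  choose c p q hpd hqp hup hdown hcap hcup using fun i => (T i).norm (x i) (y i)
  have h0 := h x y 0
  rw [show (fun i => (T i).up 0 (x i) (y i)) = fun i => (T i).parent^[p i] (c i) from
        funext hup,
      show (fun i => (T i).down 0 (x i) (y i)) = fun i => (T i).parent^[q i] (c i) from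
        funext hdown] at h0
  have hk := key_submod T f h (Finset.univ.sup fun i => p i - q i) c p q hqp hpd
    (fun i => Finset.le_sup (f := fun i => p i - q i) (Finset.mem_univ i))
  calc f (fun i => (T i).cap (x i) (y i)) + f (fun i => (T i).cup (x i) (y i))
      = f (fun i => (T i).parent^[(p i + q i + 1) / 2] (c i)) +
          f (fun i => (T i).parent^[(p i + q i) / 2] (c i)) := by
        rw [show (fun i => (T i).cap (x i) (y i)) = _ from funext hcap,
            show (fun i => (T i).cup (x i) (y i)) = _ from funext hcup]
    _ ≤ f (fun i => (T i).parent^[p i] (c i)) + f (fun i => (T i).parent^[q i] (c i)) := hk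
    _ ≤ f x + f y := h0
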